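/- Let H and K be separable complex Hilbert spaces and let A be a bounded linear operator from H to K. Then there exists a unitary operator U from K to H such that UA is self-adjoint if and only if the Hilbert space dimension of the kernel of A equals the Hilbert space dimension of the kernel of A*. -/

import Mathlib

open ContinuousLinearMap

section Aux

variable {H K : Type*} [NormedAddCommGroup H] [InnerProductSpace ℂ H]
    [CompleteSpace H] [NormedAddCommGroup K] [InnerProductSpace ℂ K] [CompleteSpace K]

lemma aux_orth_range (B : H →L[ℂ] K) :
    (LinearMap.range (B : H →ₗ[ℂ] K))ᗮ = LinearMap.ker ((ContinuousLinearMap.adjoint B : K →L[ℂ] H) : K →ₗ[ℂ] H) := by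
  ext y
  simp only [Submodule.mem_orthogonal, LinearMap.mem_ker, ContinuousLinearMap.coe_coe]
  constructor
  · intro h
    have h' : ∀ x : H, inner ℂ (x : H) (ContinuousLinearMap.adjoint B y) = (0:ℂ) := fun x => by
      rw [adjoint_inner_right]
      exact h (B x) (LinearMap.mem_range.mpr ⟨x, rfl⟩)
    have h2 := h' (ContinuousLinearMap.adjoint B y)
    rwa [inner_self_eq_zero] at h2
  · rintro h u hu
    obtain ⟨x, rfl⟩ := LinearMap.mem_range.mp hu
    rw [ContinuousLinearMap.coe_coe, ← adjoint_inner_right, h, inner_zero_right]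

lemma aux_orth_ker (B : H →L[ℂ] K) :
    (LinearMap.ker ((ContinuousLinearMap.adjoint B : K →L[ℂ] H) : K →ₗ[ℂ] H))ᗮ
      = (LinearMap.range (B : H →ₗ[ℂ] K)).topologicalClosure := by
  rw [← aux_orth_range B, Submodule.orthogonal_orthogonal_eq_closure]

lemma aux_mul_self_eq {a b : ℝ} (ha : 0 ≤ a) (hb : 0 ≤ b) (h : a * a = b * b) : a = b := by
  nlinarith [sq_nonneg (a - b), sq_nonneg (a + b)]

end Aux

set_option maxHeartbeats 2000000 in
theorem stmt_9 {H K : Type*} [NormedAddCommGroup H] [InnerProductSpace ℂ H]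
    [CompleteSpace H] [TopologicalSpace.SeparableSpace H]
    [NormedAddCommGroup K] [InnerProductSpace ℂ K]
    [CompleteSpace K] [TopologicalSpace.SeparableSpace K]
    (A : H →L[ℂ] K) :
    (∃ U : K →L[ℂ] H,
        U ∘L ContinuousLinearMap.adjoint U = ContinuousLinearMap.id ℂ H ∧
        ContinuousLinearMap.adjoint U ∘L U = ContinuousLinearMap.id ℂ K ∧
        IsSelfAdjoint (U ∘L A)) ↔
      Nonempty ((LinearMap.ker (A : H →ₗ[ℂ] K) : Submodule ℂ H) ≃ₗᵢ[ℂ]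
        (LinearMap.ker ((ContinuousLinearMap.adjoint A : K →L[ℂ] H) : K →ₗ[ℂ] H) : Submodule ℂ K)) := by
  constructor
  · rintro ⟨U, hUU, hU'U, hsa⟩
    have hUU' : ∀ x : H, U (ContinuousLinearMap.adjoint U x) = x := fun x => by
      have := ContinuousLinearMap.ext_iff.mp hUU x
      simpa using this
    have hU'U' : ∀ y : K, ContinuousLinearMap.adjoint U (U y) = y := fun y => by
      have := ContinuousLinearMap.ext_iff.mp hU'U y
      simpa using this
    have heq : ContinuousLinearMap.adjoint A ∘L ContinuousLinearMap.adjoint U = U ∘L A := by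
      rw [← adjoint_comp]
      exact isSelfAdjoint_iff'.mp hsa
    have heq' : ∀ x : H, ContinuousLinearMap.adjoint A (ContinuousLinearMap.adjoint U x)
        = U (A x) := fun x => ContinuousLinearMap.ext_iff.mp heq x
    have hkey : ∀ x : H, A x = 0 ↔
        ContinuousLinearMap.adjoint A (ContinuousLinearMap.adjoint U x) = 0 := fun x => by
      rw [heq']
      constructor
      · intro h; rw [h, map_zero]
      · intro h
        have := congrArg (ContinuousLinearMap.adjoint U) h
        rwa [hU'U', map_zero] at this
    have hadj_isom : ∀ x : H, ‖ContinuousLinearMap.adjoint U x‖ = ‖x‖ := by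
      rw [norm_map_iff_adjoint_comp_self (ContinuousLinearMap.adjoint U), adjoint_adjoint]
      rw [ContinuousLinearMap.one_def]
      exact hUU
    have hmem1 : ∀ x ∈ (LinearMap.ker (A : H →ₗ[ℂ] K) : Submodule ℂ H),
        (ContinuousLinearMap.adjoint U : H →ₗ[ℂ] K) x
          ∈ (LinearMap.ker ((ContinuousLinearMap.adjoint A : K →L[ℂ] H) : K →ₗ[ℂ] H) : Submodule ℂ K) := fun x hx =>
      LinearMap.mem_ker.mpr ((hkey x).mp (LinearMap.mem_ker.mp hx))
    have hmem2 : ∀ y ∈ (LinearMap.ker ((ContinuousLinearMap.adjoint A : K →L[ℂ] H) : K →ₗ[ℂ] H) : Submodule ℂ K),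
        (U : K →ₗ[ℂ] H) y ∈ (LinearMap.ker (A : H →ₗ[ℂ] K) : Submodule ℂ H) := fun y hy =>
      LinearMap.mem_ker.mpr ((hkey (U y)).mpr (by
        rw [hU'U']; exact LinearMap.mem_ker.mp hy))
    set f := (ContinuousLinearMap.adjoint U : H →ₗ[ℂ] K).restrict hmem1 with hf
    set g := (U : K →ₗ[ℂ] H).restrict hmem2 with hg
    refine ⟨{ toLinearEquiv := LinearEquiv.ofLinear f g ?_ ?_, norm_map' := ?_ }⟩
    · ext y
      exact hU'U' ↑y
    · ext x
      exact hUU' ↑x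
    · intro a
      exact hadj_isom ↑a
  · rintro ⟨φ⟩
    classical
    obtain ⟨T, hTnn, hT2⟩ : ∃ T : H →L[ℂ] H, (0 : H →L[ℂ] H) ≤ T ∧
        T ∘L T = ContinuousLinearMap.adjoint A ∘L A := by
      have hAAnn : (0 : H →L[ℂ] H) ≤ ContinuousLinearMap.adjoint A ∘L A := by
        rw [nonneg_iff_isPositive]
        simpa [ContinuousLinearMap.one_def] using (isPositive_one (E := K)).adjoint_conj A
      refine ⟨CFC.sqrt (ContinuousLinearMap.adjoint A ∘L A), CFC.sqrt_nonneg _, ?_⟩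
      have := CFC.sqrt_mul_sqrt_self _ hAAnn
      rwa [ContinuousLinearMap.mul_def] at this
    have hTsa : IsSelfAdjoint T := ((nonneg_iff_isPositive T).mp hTnn).isSelfAdjoint
    have hTadj : ContinuousLinearMap.adjoint T = T := hTsa.adjoint_eq
    have hnorm : ∀ x : H, ‖T x‖ = ‖A x‖ := fun x => by
      have h1 : (inner ℂ (T x) (T x) : ℂ) = inner ℂ (A x) (A x) := by
        calc (inner ℂ (T x) (T x) : ℂ)
            = inner ℂ (ContinuousLinearMap.adjoint T x) (T x) := by rw [hTadj]
          _ = inner ℂ x (T (T x)) := adjoint_inner_left T (T x) x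
          _ = inner ℂ x (ContinuousLinearMap.adjoint A (A x)) := by
              rw [← ContinuousLinearMap.comp_apply, hT2]; rfl
          _ = inner ℂ (A x) (A x) := adjoint_inner_right A x (A x)
      rw [inner_self_eq_norm_sq_to_K, inner_self_eq_norm_sq_to_K] at h1
      have h2 : ‖T x‖ ^ 2 = ‖A x‖ ^ 2 := by exact_mod_cast h1
      exact aux_mul_self_eq (norm_nonneg _) (norm_nonneg _) (by nlinarith)
    have hkerT : LinearMap.ker (T : H →ₗ[ℂ] H) = LinearMap.ker (A : H →ₗ[ℂ] K) := by
      ext x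
      simp only [LinearMap.mem_ker, ContinuousLinearMap.coe_coe]
      rw [← norm_eq_zero (a := T x), ← norm_eq_zero (a := A x), hnorm]
    have hclosA : (LinearMap.ker ((ContinuousLinearMap.adjoint A : K →L[ℂ] H) : K →ₗ[ℂ] H))ᗮ
        = (LinearMap.range (A : H →ₗ[ℂ] K)).topologicalClosure := aux_orth_ker A
    have hrangeA : LinearMap.range (A : H →ₗ[ℂ] K) ≤ (LinearMap.ker ((ContinuousLinearMap.adjoint A : K →L[ℂ] H) : K →ₗ[ℂ] H))ᗮ := by
      rw [← aux_orth_range A]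
      exact Submodule.le_orthogonal_orthogonal _
    haveI : CompleteSpace (LinearMap.ker (A : H →ₗ[ℂ] K)) := (ContinuousLinearMap.isClosed_ker A).completeSpace_coe
    haveI : CompleteSpace (LinearMap.ker ((ContinuousLinearMap.adjoint A : K →L[ℂ] H) : K →ₗ[ℂ] H)) :=
      (ContinuousLinearMap.isClosed_ker _).completeSpace_coe
    haveI : CompleteSpace ((LinearMap.ker (A : H →ₗ[ℂ] K))ᗮ : Submodule ℂ H) :=
      (Submodule.isClosed_orthogonal _).completeSpace_coe
    haveI : CompleteSpace ((LinearMap.ker ((ContinuousLinearMap.adjoint A : K →L[ℂ] H) : K →ₗ[ℂ] H))ᗮ : Submodule ℂ K) :=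
      (Submodule.isClosed_orthogonal _).completeSpace_coe
    set Tl : H →ₗ[ℂ] H := (T : H →ₗ[ℂ] H) with hTl
    set R : Submodule ℂ H := LinearMap.range Tl with hR
    have hclos : R.topologicalClosure = ((LinearMap.ker (A : H →ₗ[ℂ] K))ᗮ : Submodule ℂ H) := by
      have h1 : (LinearMap.ker ((ContinuousLinearMap.adjoint T : H →L[ℂ] H) : H →ₗ[ℂ] H))ᗮ
          = (LinearMap.range (T : H →ₗ[ℂ] H)).topologicalClosure := aux_orth_ker T
      rw [hTadj, hkerT] at h1
      rw [hR]
      have h2 : LinearMap.range Tl = LinearMap.range (T : H →ₗ[ℂ] H) := rfl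
      rw [h2]
      exact h1.symm
    have hle : LinearMap.ker Tl ≤ LinearMap.ker (A : H →ₗ[ℂ] K) := fun x hx => by
      have hx' : T x = 0 := hx
      have : A x = 0 := by
        rw [← norm_eq_zero, ← hnorm, norm_eq_zero]; exact hx'
      exact LinearMap.mem_ker.mpr this
    set q := LinearMap.quotKerEquivRange Tl with hq
    set Abar : (H ⧸ LinearMap.ker Tl) →ₗ[ℂ] K :=
      (LinearMap.ker Tl).liftQ (A : H →ₗ[ℂ] K) hle with hAbar
    set V₀ : R →ₗ[ℂ] K := Abar ∘ₗ (q.symm : R →ₗ[ℂ] (H ⧸ LinearMap.ker Tl)) with hV₀def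
    have hV₀ : ∀ x : H, V₀ ⟨T x, LinearMap.mem_range_self Tl x⟩ = A x := fun x => by
      have hqx : q (Submodule.Quotient.mk x) = ⟨T x, LinearMap.mem_range_self Tl x⟩ :=
        Subtype.ext rfl
      simp only [hV₀def, LinearMap.comp_apply, LinearEquiv.coe_coe]
      rw [← hqx, LinearEquiv.symm_apply_apply]
      rfl
    have hV₀norm : ∀ v : R, ‖V₀ v‖ = ‖(v : H)‖ := fun v => by
      obtain ⟨x, hx⟩ := v.2
      have hv : v = ⟨T x, LinearMap.mem_range_self Tl x⟩ := Subtype.ext hx.symm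
      rw [hv, hV₀]
      exact (hnorm x).symm
    set V₁ : R →ₗᵢ[ℂ] K := ⟨V₀, hV₀norm⟩ with hV₁
    set Rc : Submodule ℂ H := R.topologicalClosure with hRc
    haveI : CompleteSpace Rc := R.isClosed_topologicalClosure.completeSpace_coe
    set inc : R →ₗᵢ[ℂ] Rc := ⟨Submodule.inclusion R.le_topologicalClosure, fun x => rfl⟩ with hinc
    set e : R →L[ℂ] Rc := inc.toContinuousLinearMap with he
    have h_e : IsUniformInducing e := inc.isometry.isUniformInducing
    have h_dense : DenseRange e := by
      intro w
      rw [closure_subtype]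
      have himg : ((↑) '' Set.range e : Set H) = (R : Set H) := by
        ext z
        simp only [Set.mem_image, Set.mem_range, SetLike.mem_coe]
        constructor
        · rintro ⟨w', ⟨v, rfl⟩, rfl⟩
          exact v.2
        · intro hz
          exact ⟨e ⟨z, hz⟩, ⟨⟨z, hz⟩, rfl⟩, rfl⟩
      rw [himg, ← Submodule.topologicalClosure_coe]
      exact w.2
    set Vc : Rc →L[ℂ] K :=
      ContinuousLinearMap.extend V₁.toContinuousLinearMap e with hVcdef
    have hVc_e : ∀ v : R, Vc (e v) = V₀ v := fun v =>
      ContinuousLinearMap.extend_eq V₁.toContinuousLinearMap h_dense h_e v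
    have hVc_norm : ∀ w : Rc, ‖Vc w‖ = ‖w‖ := by
      have hcl : IsClosed {w : Rc | ‖Vc w‖ = ‖w‖} :=
        isClosed_eq Vc.continuous.norm continuous_subtype_val.norm
      intro w
      refine h_dense.induction_on w hcl fun v => ?_
      have h1 : ‖Vc (e v)‖ = ‖(v : H)‖ := by rw [hVc_e v, hV₀norm v]
      exact h1
    have hVc_mem : ∀ w : Rc, Vc w ∈ (LinearMap.ker ((ContinuousLinearMap.adjoint A : K →L[ℂ] H) : K →ₗ[ℂ] H))ᗮ := by
      have hcl : IsClosed {w : Rc | Vc w ∈ (LinearMap.ker ((ContinuousLinearMap.adjoint A : K →L[ℂ] H) : K →ₗ[ℂ] H))ᗮ} :=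
        IsClosed.preimage Vc.continuous (Submodule.isClosed_orthogonal _)
      intro w
      refine h_dense.induction_on w hcl fun v => ?_
      have h0 : Vc (e v) = V₀ v := hVc_e v
      rw [h0]
      obtain ⟨x, hx⟩ := v.2
      have hv : v = ⟨T x, LinearMap.mem_range_self Tl x⟩ := Subtype.ext hx.symm
      rw [hv, hV₀]
      exact hrangeA (LinearMap.mem_range_self (A : H →ₗ[ℂ] K) x)
    have hVc_surj : ∀ y : K, y ∈ (LinearMap.ker ((ContinuousLinearMap.adjoint A : K →L[ℂ] H) : K →ₗ[ℂ] H))ᗮ →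
        ∃ w : Rc, Vc w = y := by
      have hiso : Isometry Vc := AddMonoidHomClass.isometry_of_norm Vc hVc_norm
      have hclosed : IsClosed (Set.range Vc) := hiso.isClosedEmbedding.isClosed_range
      have hsub : (LinearMap.range (A : H →ₗ[ℂ] K) : Set K) ⊆ Set.range Vc := by
        rintro z hz
        obtain ⟨x, rfl⟩ := LinearMap.mem_range.mp hz
        exact ⟨e ⟨T x, LinearMap.mem_range_self Tl x⟩, by rw [hVc_e, hV₀]; rfl⟩
      intro y hy
      have hy' : y ∈ closure (LinearMap.range (A : H →ₗ[ℂ] K) : Set K) := by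
        rw [hclosA] at hy
        rwa [← SetLike.mem_coe, Submodule.topologicalClosure_coe] at hy
      exact closure_minimal hsub hclosed hy'
    set ι : (((LinearMap.ker (A : H →ₗ[ℂ] K))ᗮ : Submodule ℂ H)) ≃ₗᵢ[ℂ] Rc :=
      LinearIsometryEquiv.ofEq _ _ hclos.symm with hι
    set Pk := Submodule.orthogonalProjection (LinearMap.ker (A : H →ₗ[ℂ] K)) with hPkdef
    set Po := Submodule.orthogonalProjection ((LinearMap.ker (A : H →ₗ[ℂ] K))ᗮ) with hPodef
    set φL : (LinearMap.ker (A : H →ₗ[ℂ] K) : Submodule ℂ H) →L[ℂ]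
        (LinearMap.ker ((ContinuousLinearMap.adjoint A : K →L[ℂ] H) : K →ₗ[ℂ] H) : Submodule ℂ K) :=
      φ.toLinearIsometry.toContinuousLinearMap with hφL
    set W : H →L[ℂ] K :=
      ((LinearMap.ker ((ContinuousLinearMap.adjoint A : K →L[ℂ] H) : K →ₗ[ℂ] H)).subtypeL ∘L φL ∘L Pk)
        + (Vc ∘L ι.toLinearIsometry.toContinuousLinearMap ∘L Po) with hW
    have hWapp : ∀ x : H, W x = (↑(φ (Pk x)) : K) + Vc (ι (Po x)) := fun x => rfl
    have hWT : ∀ x : H, W (T x) = A x := fun x => by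
      have hmem : T x ∈ ((LinearMap.ker (A : H →ₗ[ℂ] K))ᗮ : Submodule ℂ H) := by
        rw [← hclos]
        exact R.le_topologicalClosure (LinearMap.mem_range_self Tl x)
      have h1 : Pk (T x) = 0 :=
        Submodule.orthogonalProjectionOnto_apply_of_mem_orthogonal hmem
      have h2 : Po (T x) = ⟨T x, hmem⟩ :=
        Submodule.orthogonalProjection_mem_subspace_eq_self
          (⟨T x, hmem⟩ : ((LinearMap.ker (A : H →ₗ[ℂ] K))ᗮ : Submodule ℂ H))
      have h3 : ι ⟨T x, hmem⟩ = e ⟨T x, LinearMap.mem_range_self Tl x⟩ := Subtype.ext rfl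
      rw [hWapp, h1, h2, h3, hVc_e, hV₀]
      simp
    have hWnorm : ∀ x : H, ‖W x‖ = ‖x‖ := fun x => by
      have ha : (↑(φ (Pk x)) : K) ∈ LinearMap.ker ((ContinuousLinearMap.adjoint A : K →L[ℂ] H) : K →ₗ[ℂ] H) :=
        (φ (Pk x)).2
      have hb : Vc (ι (Po x)) ∈ (LinearMap.ker ((ContinuousLinearMap.adjoint A : K →L[ℂ] H) : K →ₗ[ℂ] H))ᗮ := hVc_mem _
      have hinner : (inner ℂ (↑(φ (Pk x)) : K) (Vc (ι (Po x))) : ℂ) = 0 :=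
        Submodule.inner_right_of_mem_orthogonal ha hb
      have hpyth := norm_add_sq_eq_norm_sq_add_norm_sq_of_inner_eq_zero _ _ hinner
      have h1 : ‖(↑(φ (Pk x)) : K)‖ = ‖Pk x‖ := φ.norm_map (Pk x)
      have h2 : ‖Vc (ι (Po x))‖ = ‖Po x‖ := hVc_norm (ι (Po x))
      have h3 := Submodule.norm_sq_eq_add_norm_sq_projection x (LinearMap.ker (A : H →ₗ[ℂ] K))
      rw [hWapp]
      refine aux_mul_self_eq (norm_nonneg _) (norm_nonneg _) ?_
      rw [hpyth, h1, h2]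
      nlinarith [h3]
    have hWsurj : ∀ y : K, ∃ x : H, W x = y := fun y => by
      set y1 := Submodule.orthogonalProjection (LinearMap.ker ((ContinuousLinearMap.adjoint A : K →L[ℂ] H) : K →ₗ[ℂ] H)) y with hy1
      set y2 := Submodule.orthogonalProjection ((LinearMap.ker ((ContinuousLinearMap.adjoint A : K →L[ℂ] H) : K →ₗ[ℂ] H))ᗮ) y with hy2
      obtain ⟨w, hwVc⟩ := hVc_surj (↑y2) y2.2
      have hwv : ι (ι.symm w) = w := ι.apply_symm_apply w
      refine ⟨(↑(φ.symm y1) : H) + (↑(ι.symm w) : H), ?_⟩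
      have hPk1 : Pk ((↑(φ.symm y1) : H) + (↑(ι.symm w) : H)) = φ.symm y1 := by
        rw [map_add, Submodule.orthogonalProjection_mem_subspace_eq_self (φ.symm y1),
          Submodule.orthogonalProjectionOnto_apply_of_mem_orthogonal (ι.symm w).2, add_zero]
      have hPo1 : Po ((↑(φ.symm y1) : H) + (↑(ι.symm w) : H)) = ι.symm w := by
        rw [map_add, Submodule.orthogonalProjectionOnto_apply_of_mem_orthogonal
          ((LinearMap.ker (A : H →ₗ[ℂ] K)).le_orthogonal_orthogonal (φ.symm y1).2),
          Submodule.orthogonalProjection_mem_subspace_eq_self (ι.symm w), zero_add]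
      rw [hWapp, hPk1, hPo1, φ.apply_symm_apply, hwv, hwVc]
      exact Submodule.starProjection_add_starProjection_orthogonal y
    set Wli : H →ₗᵢ[ℂ] K := ⟨(W : H →ₗ[ℂ] K), hWnorm⟩ with hWli
    have hWli_surj : Function.Surjective Wli := fun y => hWsurj y
    set Weq : H ≃ₗᵢ[ℂ] K := LinearIsometryEquiv.ofSurjective Wli hWli_surj with hWeqdef
    have hWeq_app : ∀ x : H, Weq x = W x := fun x => by
      rw [hWeqdef, LinearIsometryEquiv.coe_ofSurjective]
      rfl
    refine ⟨(Weq.symm : K →L[ℂ] H), ?_, ?_, ?_⟩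
    · rw [Weq.symm.adjoint_eq_symm, LinearIsometryEquiv.symm_symm]
      ext x
      simp
    · rw [Weq.symm.adjoint_eq_symm, LinearIsometryEquiv.symm_symm]
      ext y
      simp
    · have hUA : (Weq.symm : K →L[ℂ] H) ∘L A = T := by
        ext x
        have h1 : Weq (T x) = A x := by rw [hWeq_app]; exact hWT x
        have h2 : ((Weq.symm : K →L[ℂ] H) ∘L A) x = Weq.symm (A x) := rfl
        rw [h2, ← h1, LinearIsometryEquiv.symm_apply_apply]
      rw [hUA]
      exact hTsa
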